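/- Let u : [0,∞) → [0,∞) be continuous, and let δ > 0 and α > β > 0 be constants. If u(t) ≤ δ + β ∫₀ᵗ e^{-α(t-s)} u(s) ds for all t ≥ 0, then u(t) ≤ δα/(α - β) for all t ≥ 0. -/

import Mathlib

set_option maxHeartbeats 1000000

lemma exp_kernel_integral (α t C : ℝ) (hα : 0 < α) :
    ∫ s in (0:ℝ)..t, Real.exp (-α * (t - s)) * C
      = C * (1 - Real.exp (-α * t)) / α := by
  have hderiv : ∀ s ∈ Set.uIcc (0:ℝ) t,
      HasDerivAt (fun x => C / α * Real.exp (α * x - α * t))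
        (Real.exp (-α * (t - s)) * C) s := by
    intro s _
    have h1 : HasDerivAt (fun x : ℝ => α * x - α * t) α s := by
      simpa using ((hasDerivAt_id s).const_mul α).sub_const (α * t)
    have h2 := (h1.exp).const_mul (C / α)
    refine h2.congr_deriv ?_
    rw [show -α * (t - s) = α * s - α * t by ring]
    field_simp
  have hint : IntervalIntegrable (fun s => Real.exp (-α * (t - s)) * C)
      MeasureTheory.volume 0 t := by
    apply Continuous.intervalIntegrable
    continuity
  rw [intervalIntegral.integral_eq_sub_of_hasDerivAt hderiv hint]
  simp [mul_comm]
  ring_nf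

theorem gronwall_exponential_kernel
    (u : ℝ → ℝ) (δ α β : ℝ)
    (hu_cont : ContinuousOn u (Set.Ici 0))
    (hu_nonneg : ∀ t ≥ (0:ℝ), 0 ≤ u t)
    (hδ : 0 < δ) (hβ : 0 < β) (hαβ : β < α)
    (h : ∀ t ≥ (0:ℝ), u t ≤ δ + β * ∫ s in (0:ℝ)..t, Real.exp (-α * (t - s)) * u s) :
    ∀ t ≥ (0:ℝ), u t ≤ δ * α / (α - β) := by
  have hα : (0:ℝ) < α := hβ.trans hαβ
  have hαβ' : (0:ℝ) < α - β := sub_pos.mpr hαβ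
  set M := δ * α / (α - β) with hMdef
  have hM : 0 < M := by positivity
  have hδM : δ < M := by
    rw [hMdef, lt_div_iff₀ hαβ']
    nlinarith
  have hu0 : u 0 < M := by
    have := h 0 le_rfl
    simp at this
    linarith
  have key : ∀ C, M < C → ∀ t ≥ (0:ℝ), u t < C := by
    intro C hC
    by_contra hcon
    push_neg at hcon
    obtain ⟨T, hT0, hTC⟩ := hcon
    set A : Set ℝ := Set.Icc 0 T ∩ u ⁻¹' Set.Ici C with hA
    have hclosed : IsClosed A := by
      apply ContinuousOn.preimage_isClosed_of_isClosed
        (hu_cont.mono (by intro x hx; exact hx.1)) isClosed_Icc isClosed_Ici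
    have hne : A.Nonempty := ⟨T, ⟨⟨hT0, le_rfl⟩, hTC⟩⟩
    have hbdd : BddBelow A := ⟨0, fun x hx => hx.1.1⟩
    set t₀ := sInf A with ht₀def
    have ht₀A : t₀ ∈ A := hclosed.csInf_mem hne hbdd
    have ht₀0 : 0 ≤ t₀ := ht₀A.1.1
    have ht₀T : t₀ ≤ T := ht₀A.1.2
    have hCu : C ≤ u t₀ := ht₀A.2
    have ht₀pos : 0 < t₀ := by
      rcases ht₀0.lt_or_eq with h' | h'
      · exact h'
      · exfalso
        have : u t₀ < C := by rw [← h']; exact hu0.trans hC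
        linarith
    have hlt_lt : ∀ s, 0 ≤ s → s < t₀ → u s < C := by
      intro s hs hst
      by_contra hge
      push_neg at hge
      have hsA : s ∈ A := ⟨⟨hs, hst.le.trans ht₀T⟩, hge⟩
      exact absurd (csInf_le hbdd hsA) (not_le.mpr hst)
    have hle_t₀ : u t₀ ≤ C := by
      have htend : Filter.Tendsto u (nhdsWithin t₀ (Set.Ico 0 t₀)) (nhds (u t₀)) :=
        (hu_cont t₀ ht₀0).mono_left (nhdsWithin_mono _ (fun x hx => hx.1))
      have hres : t₀ ∈ closure (Set.Ico 0 t₀) := by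
        rw [closure_Ico (ne_of_lt ht₀pos)]
        exact ⟨ht₀0, le_rfl⟩
      have : (nhdsWithin t₀ (Set.Ico 0 t₀)).NeBot :=
        mem_closure_iff_nhdsWithin_neBot.mp hres
      exact le_of_tendsto htend (Filter.eventually_of_mem self_mem_nhdsWithin
        (fun s hs => (hlt_lt s hs.1 hs.2).le))
    have hle : ∀ s ∈ Set.Icc (0:ℝ) t₀, u s ≤ C := by
      intro s hs
      rcases hs.2.lt_or_eq with h' | h'
      · exact (hlt_lt s hs.1 h').le
      · rw [h']; exact hle_t₀
    have hint1 : IntervalIntegrable (fun s => Real.exp (-α * (t₀ - s)) * u s)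
        MeasureTheory.volume 0 t₀ := by
      apply ContinuousOn.intervalIntegrable
      rw [Set.uIcc_of_le ht₀0]
      exact ((Real.continuous_exp.comp (by continuity)).continuousOn).mul
        (hu_cont.mono (fun x hx => hx.1))
    have hint2 : IntervalIntegrable (fun s => Real.exp (-α * (t₀ - s)) * C)
        MeasureTheory.volume 0 t₀ := by
      apply Continuous.intervalIntegrable
      continuity
    have hmono : (∫ s in (0:ℝ)..t₀, Real.exp (-α * (t₀ - s)) * u s)
        ≤ ∫ s in (0:ℝ)..t₀, Real.exp (-α * (t₀ - s)) * C := by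
      apply intervalIntegral.integral_mono_on ht₀0 hint1 hint2
      intro s hs
      exact mul_le_mul_of_nonneg_left (hle s hs) (Real.exp_pos _).le
    have hval := exp_kernel_integral α t₀ C hα
    have hC0 : 0 < C := hM.trans hC
    have hexp0 : 0 < Real.exp (-α * t₀) := Real.exp_pos _
    have hbound : u t₀ ≤ δ + β * (C * (1 - Real.exp (-α * t₀)) / α) := by
      calc u t₀ ≤ δ + β * ∫ s in (0:ℝ)..t₀, Real.exp (-α * (t₀ - s)) * u s :=
            h t₀ ht₀0
        _ ≤ δ + β * (C * (1 - Real.exp (-α * t₀)) / α) := by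
            rw [← hval]
            exact add_le_add_right (mul_le_mul_of_nonneg_left hmono hβ.le) δ
    have hfin : δ + β * (C * (1 - Real.exp (-α * t₀)) / α) < C := by
      have h1 : δ * α < C * (α - β) := (div_lt_iff₀ hαβ').mp hC
      have h2 : C * (1 - Real.exp (-α * t₀)) ≤ C := by
        have h2' : 1 - Real.exp (-α * t₀) ≤ 1 := by linarith
        calc C * (1 - Real.exp (-α * t₀)) ≤ C * 1 :=
              mul_le_mul_of_nonneg_left h2' hC0.le
          _ = C := mul_one C
      have h3 : β * (C * (1 - Real.exp (-α * t₀)) / α) ≤ β * (C / α) := by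
        gcongr
      have h5 : β * (C / α) < C - δ := by
        rw [mul_div_assoc', div_lt_iff₀ hα]
        nlinarith [h1]
      linarith
    linarith
  intro t ht
  by_contra hlt
  push_neg at hlt
  exact absurd (key (u t) hlt t ht) (lt_irrefl _)
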